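/- arXiv:0906.1372 — 2 statements merged into one kernel-verified Lean document; each statement's English description precedes it below -/
import Mathlib

section
/- Let (X,d) be a metric space and (𝒰_n) a sequence of covers of X such that each 𝒰_n is uniformly bounded (there is a_n < ∞ with diam U ≤ a_n for all U ∈ 𝒰_n), each 𝒰_n refines 𝒰_{n+1}, and the Lebesgue numbers satisfy L(𝒰_n) → ∞. For a cover 𝒰, let RipsG_{𝒰}(X) be the graph with vertex set X and an edge [x,y], x ≠ y, whenever some U ∈ 𝒰 contains both x and y. Then: (1) for n ≤ m every edge of RipsG_{𝒰_n}(X) is an edge of RipsG_{𝒰_m}(X); (2) for every n there is m ≥ n such that whenever x, y are at graph distance at most 2 in RipsG_{𝒰_n}(X), either x = y or [x,y] is an edge of RipsG_{𝒰_m}(X); (3) for each n the identity map from (X, graph metric of RipsG_{𝒰_n}(X)) to (X,d) is Lipschitz; (4) for every Lipschitz function g : V → (X,d) from a graph V there is n such that g is a short map into RipsG_{𝒰_n}(X); (5) if g, h : V → X are short maps from a graph V into RipsG_{𝒰_n}(X) with sup_v d(g(v),h(v)) < ∞, then there is m ≥ n such that for every vertex v, either g(v) = h(v) or [g(v),h(v)]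 is an edge of RipsG_{𝒰_m}(X). -/
open scoped ENNReal NNReal

/-- The Rips graph of a cover `𝒰` of a set `X`: `[x,y]`, `x ≠ y`, is an edge whenever
some member `U ∈ 𝒰` contains both `x` and `y`. -/
def ripsGraphOfCover {X : Type u} (𝒰 : Set (Set X)) : SimpleGraph X where
  Adj x y := x ≠ y ∧ ∃ U ∈ 𝒰, x ∈ U ∧ y ∈ U
  symm := ⟨by
    rintro x y ⟨hxy, U, hU, hx, hy⟩
    exact ⟨hxy.symm, U, hU, hy, hx⟩⟩
  loopless := ⟨fun x h => h.1 rfl⟩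

/-- A function from the vertex set of a graph (with its graph metric) to a metric
space is Lipschitz if there is `L < ∞` with `d(g v, g w) ≤ L · d_G(v,w)`. -/
def GraphLipschitz {V : Type w} {X : Type u} [MetricSpace X]
    (Γ : SimpleGraph V) (g : V → X) : Prop :=
  ∃ L : ℝ≥0, ∀ v w : V, edist (g v) (g w) ≤ (L : ℝ≥0∞) * (Γ.edist v w : ℝ≥0∞)

private lemma rips_dist_le_of_walk {X : Type u} [MetricSpace X] {G : SimpleGraph X} {a : ℝ}
    (ha : ∀ x y : X, G.Adj x y → dist x y ≤ a) (ha0 : 0 ≤ a) :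
    ∀ {x y : X} (p : G.Walk x y), dist x y ≤ a * p.length := by
  intro x y p
  induction p with
  | nil => simp
  | @cons u b c h p ih =>
    have h1 : dist u c ≤ dist u b + dist b c := dist_triangle _ _ _
    have h2 : dist u b ≤ a := ha _ _ h
    simp only [SimpleGraph.Walk.length_cons]
    push_cast
    nlinarith [ih]

/-- for a sequence of uniformly bounded covers `𝒰_n` of a metric space,
each refining the next, with Lebesgue numbers tending to infinity, the Rips graphs
`RipsG_{𝒰_n}(X)` form a coarse graph of `(X,d)`: conclusions (1)–(5). -/
theorem rips_graphs_of_covers_form_coarse_graph {X : Type u} [MetricSpace X]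
    (𝒰 : ℕ → Set (Set X))
    (hcover : ∀ n, ∀ x : X, ∃ U ∈ 𝒰 n, x ∈ U)
    (hbdd : ∀ n, ∃ a : ℝ, ∀ U ∈ 𝒰 n, ∀ x ∈ U, ∀ y ∈ U, dist x y ≤ a)
    (hrefine : ∀ n, ∀ U ∈ 𝒰 n, ∃ V ∈ 𝒰 (n + 1), U ⊆ V)
    (hLebesgue : ∀ r : ℝ, ∃ N : ℕ, ∀ n ≥ N, ∀ A : Set X,
        (∀ x ∈ A, ∀ y ∈ A, dist x y ≤ r) → ∃ U ∈ 𝒰 n, A ⊆ U) :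
    -- (1) edges persist along the sequence
    (∀ n m : ℕ, n ≤ m → ∀ x y : X,
        (ripsGraphOfCover (𝒰 n)).Adj x y → (ripsGraphOfCover (𝒰 m)).Adj x y) ∧
    -- (2) graph distance ≤ 2 at stage n becomes an edge at some stage m ≥ n
    (∀ n : ℕ, ∃ m ≥ n, ∀ x y : X,
        (ripsGraphOfCover (𝒰 n)).edist x y ≤ 2 →
        x = y ∨ (ripsGraphOfCover (𝒰 m)).Adj x y) ∧
    -- (3) the identity from the graph metric at stage n to (X,d) is Lipschitz
    (∀ n : ℕ, ∃ L : ℝ≥0, ∀ x y : X,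
        edist x y ≤ (L : ℝ≥0∞) * ((ripsGraphOfCover (𝒰 n)).edist x y : ℝ≥0∞)) ∧
    -- (4) Lipschitz maps from graphs are short into some stage
    (∀ (V : Type u) (Γ : SimpleGraph V) (g : V → X), GraphLipschitz Γ g →
        ∃ n : ℕ, ∀ v w : V, Γ.Adj v w →
          g v = g w ∨ (ripsGraphOfCover (𝒰 n)).Adj (g v) (g w)) ∧
    -- (5) short maps at finite distance become adjacent at some later stage
    (∀ (V : Type u) (Γ : SimpleGraph V) (n : ℕ) (g h : V → X),
        (∀ v w : V, Γ.Adj v w → g v = g w ∨ (ripsGraphOfCover (𝒰 n)).Adj (g v) (g w)) →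
        (∀ v w : V, Γ.Adj v w → h v = h w ∨ (ripsGraphOfCover (𝒰 n)).Adj (h v) (h w)) →
        (∃ C : ℝ, ∀ v : V, dist (g v) (h v) ≤ C) →
        ∃ m ≥ n, ∀ v : V,
          g v = h v ∨ (ripsGraphOfCover (𝒰 m)).Adj (g v) (h v)) := by
  -- refinement propagates along the sequence
  have hrefine' : ∀ n m : ℕ, n ≤ m → ∀ U ∈ 𝒰 n, ∃ V ∈ 𝒰 m, U ⊆ V := by
    intro n m hnm
    induction m, hnm using Nat.le_induction with
    | base => exact fun U hU => ⟨U, hU, subset_rfl⟩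
    | succ m hm ih =>
      intro U hU
      obtain ⟨V, hV, hUV⟩ := ih U hU
      obtain ⟨W, hW, hVW⟩ := hrefine m V hV
      exact ⟨W, hW, hUV.trans hVW⟩
  have h1 : ∀ n m : ℕ, n ≤ m → ∀ x y : X,
      (ripsGraphOfCover (𝒰 n)).Adj x y → (ripsGraphOfCover (𝒰 m)).Adj x y := by
    rintro n m hnm x y ⟨hxy, U, hU, hx, hy⟩
    obtain ⟨V, hV, hUV⟩ := hrefine' n m hnm U hU
    exact ⟨hxy, V, hV, hUV hx, hUV hy⟩
  -- nonnegative bounds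
  have hbdd' : ∀ n, ∃ a : ℝ, 0 ≤ a ∧ ∀ x y : X,
      (ripsGraphOfCover (𝒰 n)).Adj x y → dist x y ≤ a := by
    intro n
    obtain ⟨a, ha⟩ := hbdd n
    refine ⟨max a 0, le_max_right _ _, ?_⟩
    rintro x y ⟨-, U, hU, hx, hy⟩
    exact (ha U hU x hx y hy).trans (le_max_left _ _)
  refine ⟨h1, ?_, ?_, ?_, ?_⟩
  · -- (2)
    intro n
    obtain ⟨a, ha0, ha⟩ := hbdd' n
    obtain ⟨N, hN⟩ := hLebesgue (2 * a)
    refine ⟨max n N, le_max_left _ _, ?_⟩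
    intro x y hxy
    by_cases hxyeq : x = y
    · exact Or.inl hxyeq
    right
    have hne : (ripsGraphOfCover (𝒰 n)).edist x y ≠ ⊤ := by
      intro h; rw [h] at hxy; exact absurd hxy (by simp)
    obtain ⟨p, hp⟩ := SimpleGraph.exists_walk_of_edist_ne_top hne
    have hlen : (p.length : ℕ∞) ≤ 2 := by rw [hp]; exact hxy
    have hlen' : (p.length : ℝ) ≤ 2 := by exact_mod_cast hlen
    have hdist : dist x y ≤ 2 * a := by
      have := rips_dist_le_of_walk ha ha0 p
      nlinarith
    have hA : ∀ u ∈ ({x, y} : Set X), ∀ v ∈ ({x, y} : Set X), dist u v ≤ 2 * a := by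
      rintro u (rfl | rfl) v (rfl | rfl)
      · simp; linarith
      · exact hdist
      · rw [dist_comm]; exact hdist
      · simp; linarith
    obtain ⟨U, hU, hAU⟩ := hN (max n N) (le_max_right _ _) {x, y} hA
    exact ⟨hxyeq, U, hU, hAU (by simp), hAU (by simp)⟩
  · -- (3)
    intro n
    obtain ⟨a, ha0, ha⟩ := hbdd' n
    refine ⟨Real.toNNReal (max a 1), ?_⟩
    intro x y
    set G := ripsGraphOfCover (𝒰 n)
    by_cases htop : G.edist x y = ⊤
    · rw [htop]
      have : ((Real.toNNReal (max a 1)) : ℝ≥0∞) ≠ 0 := by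
        simp [Real.toNNReal_eq_zero]
      simp [ENNReal.mul_top this]
    · obtain ⟨p, hp⟩ := SimpleGraph.exists_walk_of_edist_ne_top htop
      have hd : dist x y ≤ max a 1 * p.length := by
        have h1 := rips_dist_le_of_walk ha ha0 p
        have : a * p.length ≤ max a 1 * p.length := by
          apply mul_le_mul_of_nonneg_right (le_max_left _ _) (by positivity)
        linarith
      calc edist x y = ENNReal.ofReal (dist x y) := edist_dist x y
        _ ≤ ENNReal.ofReal (max a 1 * p.length) := ENNReal.ofReal_le_ofReal hd
        _ = ENNReal.ofReal (max a 1) * ENNReal.ofReal (p.length : ℝ) :=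
            ENNReal.ofReal_mul (by positivity)
        _ = (Real.toNNReal (max a 1) : ℝ≥0∞) * ((p.length : ℕ∞) : ℝ≥0∞) := by
            rw [ENNReal.ofReal_natCast, ENat.toENNReal_coe]; rfl
        _ = (Real.toNNReal (max a 1) : ℝ≥0∞) * ((G.edist x y : ℕ∞) : ℝ≥0∞) := by
            rw [hp]
  · -- (4)
    rintro V Γ g ⟨L, hL⟩
    obtain ⟨N, hN⟩ := hLebesgue (L : ℝ)
    refine ⟨N, ?_⟩
    intro v w hvw
    by_cases heq : g v = g w
    · exact Or.inl heq
    right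
    have hedist : Γ.edist v w ≤ 1 := by
      rw [← SimpleGraph.edist_eq_one_iff_adj] at hvw
      exact hvw.le
    have hle : edist (g v) (g w) ≤ (L : ℝ≥0∞) := by
      calc edist (g v) (g w) ≤ (L : ℝ≥0∞) * (Γ.edist v w : ℝ≥0∞) := hL v w
        _ ≤ (L : ℝ≥0∞) * 1 := by
            apply mul_le_mul_right 
            exact_mod_cast ENat.toENNReal_mono hedist
        _ = (L : ℝ≥0∞) := mul_one _
    have hdist : dist (g v) (g w) ≤ (L : ℝ) := by
      rw [edist_le_coe] at hle
      exact_mod_cast hle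
    have hL0 : (0:ℝ) ≤ L := L.coe_nonneg
    have hA : ∀ u ∈ ({g v, g w} : Set X), ∀ z ∈ ({g v, g w} : Set X), dist u z ≤ (L:ℝ) := by
      rintro u (rfl | rfl) z (rfl | rfl)
      · simp [hL0]
      · exact hdist
      · rw [dist_comm]; exact hdist
      · simp [hL0]
    obtain ⟨U, hU, hAU⟩ := hN N le_rfl {g v, g w} hA
    exact ⟨heq, U, hU, hAU (by simp), hAU (by simp)⟩
  · -- (5)
    rintro V Γ n g h hg hh ⟨C, hC⟩
    obtain ⟨N, hN⟩ := hLebesgue (max C 0)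
    refine ⟨max n N, le_max_left _ _, ?_⟩
    intro v
    by_cases heq : g v = h v
    · exact Or.inl heq
    right
    have hd : dist (g v) (h v) ≤ max C 0 := le_max_of_le_left (hC v)
    have hA : ∀ u ∈ ({g v, h v} : Set X), ∀ z ∈ ({g v, h v} : Set X),
        dist u z ≤ max C 0 := by
      rintro u (rfl | rfl) z (rfl | rfl)
      · simp
      · exact hd
      · rw [dist_comm]; exact hd
      · simp
    obtain ⟨U, hU, hAU⟩ := hN (max n N) (le_max_right _ _) {g v, h v} hA
    exact ⟨heq, U, hU, hAU (by simp), hAU (by simp)⟩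
end

section
/- Let (X,d_X) and (Y,d_Y) be metric spaces, let (V_n, i_{n,m}, p_n) be a coarse graph of X and (W_n, j_{n,m}, q_n) a coarse graph of Y. Suppose (f_k) is a pre-morphism from (V_n) to (W_n): each f_k : V_k → W_{n(k)} is a short map and for every k there is m ≥ n(k+1) such that j_{n(k),m}∘f_k ~ls j_{n(k+1),m}∘f_{k+1}∘i_{k,k+1} (with respect to the graph metric of W_m). Then there exists a bornologous function f : X → Y such that q_{n(k)}∘f_k ~ls f∘p_k for every k, and f is unique up to ls-equivalence: any two bornologous functions with this property are ls-equivalent. -/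
open scoped ENNReal NNReal

/-- A function between metric spaces is bornologous if for every `t > 0` there is
`s > 0` such that `d(x,y) < t` implies `d(α x, α y) < s`. -/
def Bornologous {X : Type u} {Y : Type v} [MetricSpace X] [MetricSpace Y]
    (α : X → Y) : Prop :=
  ∀ t : ℝ, 0 < t → ∃ s : ℝ, 0 < s ∧ ∀ x y : X, dist x y < t → dist (α x) (α y) < s

/-- Two functions into a metric space are ls-equivalent if they are within finite
distance from each other. -/
def LSClose {Z : Type w} {X : Type u} [MetricSpace X] (f g : Z → X) : Prop :=
  ∃ C : ℝ, ∀ z : Z, dist (f z) (g z) ≤ C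

/-- Two functions into the vertex set of a graph are ls-equivalent with respect to
the graph metric if they are within finite graph distance from each other. -/
def LSCloseGraph {Z : Type w} {W : Type u} (Γ : SimpleGraph W) (f g : Z → W) : Prop :=
  ∃ C : ℕ, ∀ z : Z, Γ.edist (f z) (g z) ≤ (C : ℕ∞)

/-- A map between graphs is short if it sends edges to edges or to vertices. -/
def Short {A : Type u} {B : Type v} (Γ : SimpleGraph A) (Λ : SimpleGraph B)
    (f : A → B) : Prop :=
  ∀ v w : A, Γ.Adj v w → f v = f w ∨ Λ.Adj (f v) (f w)

/-- A coarse graph of a metric space `X`: a direct sequence of graphs `V n` with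
short bonding maps `i n m`, together with Lipschitz maps `p n : V n → X`, satisfying
conditions (i)–(iv). -/
structure CoarseGraphOf (X : Type u) [MetricSpace X] where
  V : ℕ → Type u
  G : ∀ n, SimpleGraph (V n)
  i : ∀ n m, n ≤ m → V n → V m
  p : ∀ n, V n → X
  i_id : ∀ n (v : V n), i n n le_rfl v = v
  i_comp : ∀ n m k (h₁ : n ≤ m) (h₂ : m ≤ k) (v : V n),
    i m k h₂ (i n m h₁ v) = i n k (h₁.trans h₂) v
  i_short : ∀ n m (h : n ≤ m), Short (G n) (G m) (i n m h)
  p_lip : ∀ n, GraphLipschitz (G n) (p n)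
  -- (i) distance ≤ 2 at stage n becomes distance ≤ 1 at some later stage
  dist_two : ∀ n, ∃ m, ∃ h : n < m, ∀ v w : V n, (G n).edist v w ≤ 2 →
    i n m h.le v = i n m h.le w ∨ (G m).Adj (i n m h.le v) (i n m h.le w)
  -- (ii) the projections are compatible up to ls-equivalence
  p_compat : ∀ n, LSClose (p n) (fun v => p (n + 1) (i n (n + 1) (Nat.le_succ n) v))
  -- (iii) every Lipschitz map from a graph into X lifts to a short map
  lift : ∀ (W : Type u) (Γ : SimpleGraph W) (g : W → X), GraphLipschitz Γ g →
    ∃ (n : ℕ) (g' : W → V n), Short Γ (G n) g' ∧ LSClose (fun w => p n (g' w)) g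
  -- (iv) short maps ls-close over X become ls-close at a later stage
  sep : ∀ (W : Type u) (Γ : SimpleGraph W) (n : ℕ) (g h : W → V n),
    Short Γ (G n) g → Short Γ (G n) h →
    LSClose (fun w => p n (g w)) (fun w => p n (h w)) →
    ∃ m, ∃ hm : n < m,
      LSCloseGraph (G m) (fun w => i n m hm.le (g w)) (fun w => i n m hm.le (h w))

lemma edist_le_one_cases {A : Type u} {Γ : SimpleGraph A} {v w : A}
    (h : Γ.edist v w ≤ 1) : v = w ∨ Γ.Adj v w := by
  rcases eq_or_ne v w with rfl | hne
  · exact Or.inl rfl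
  · right
    have h1 : 1 ≤ Γ.edist v w := Order.one_le_iff_pos.mpr (Γ.edist_pos_of_ne hne)
    exact SimpleGraph.edist_eq_one_iff_adj.mp (le_antisymm h h1)

lemma adj_edist_le_one {A : Type u} {Γ : SimpleGraph A} {v w : A}
    (h : v = w ∨ Γ.Adj v w) : Γ.edist v w ≤ 1 := by
  rcases h with rfl | h
  · simp [SimpleGraph.edist_self]
  · exact SimpleGraph.edist_eq_one_iff_adj.mpr h |>.le

lemma short_comp {A B C : Type*} {Γ : SimpleGraph A} {Λ : SimpleGraph B} {Θ : SimpleGraph C}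
    {f : A → B} {g : B → C} (hf : Short Γ Λ f) (hg : Short Λ Θ g) :
    Short Γ Θ (g ∘ f) := by
  intro v w h
  rcases hf v w h with he | ha
  · exact Or.inl (congrArg g he)
  · exact hg _ _ ha

lemma short_edist_le {A : Type u} {B : Type v} {Γ : SimpleGraph A} {Λ : SimpleGraph B}
    {f : A → B} (hf : Short Γ Λ f) (v w : A) : Λ.edist (f v) (f w) ≤ Γ.edist v w := by
  rcases eq_or_ne (Γ.edist v w) ⊤ with h | h
  · simp [h]
  obtain ⟨p, hp⟩ := SimpleGraph.exists_walk_of_edist_ne_top h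
  rw [← hp]
  clear hp h
  induction p with
  | nil => simp [SimpleGraph.edist_self]
  | cons h q ih =>
    rename_i a b c
    calc Λ.edist (f a) (f c) ≤ Λ.edist (f a) (f b) + Λ.edist (f b) (f c) :=
          SimpleGraph.edist_triangle
      _ ≤ 1 + q.length := add_le_add (adj_edist_le_one (hf _ _ h)) ih
      _ = ((q.length + 1 : ℕ) : ℕ∞) := by push_cast; ring
      _ = _ := by rw [SimpleGraph.Walk.length_cons]


lemma walk_half {A : Type u} {B : Type v} {Γ : SimpleGraph A} {Λ : SimpleGraph B} {f : A → B}
    (hf : ∀ v w : A, Γ.edist v w ≤ 2 → f v = f w ∨ Λ.Adj (f v) (f w)) :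
    ∀ (l : ℕ) {v w : A} (p : Γ.Walk v w), p.length ≤ l →
      Λ.edist (f v) (f w) ≤ (((l + 1) / 2 : ℕ) : ℕ∞) := by
  intro l
  induction l using Nat.strong_induction_on with
  | _ l ih =>
    intro v w p hp
    match p with
    | .nil => simp [SimpleGraph.edist_self]
    | .cons h .nil =>
      have h2 : Γ.edist v w ≤ 2 := by
        calc Γ.edist v w ≤ 1 := SimpleGraph.edist_eq_one_iff_adj.mpr h |>.le
          _ ≤ 2 := by norm_num
      have := hf v w h2
      have hl : 1 ≤ l := by simpa using hp
      have : Λ.edist (f v) (f w) ≤ 1 := by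
        rcases this with he | ha
        · simp [he, SimpleGraph.edist_self]
        · exact SimpleGraph.edist_eq_one_iff_adj.mpr ha |>.le
      refine this.trans ?_
      have : 1 ≤ (l + 1) / 2 := by omega
      exact_mod_cast this
    | .cons h (.cons h' q) =>
      rename_i b c
      have hl : q.length + 2 ≤ l := by simp at hp; omega
      have hvc : Γ.edist v c ≤ 2 := by
        calc Γ.edist v c ≤ Γ.edist v b + Γ.edist b c := SimpleGraph.edist_triangle
          _ ≤ 1 + 1 := add_le_add (SimpleGraph.edist_eq_one_iff_adj.mpr h |>.le)
              (SimpleGraph.edist_eq_one_iff_adj.mpr h' |>.le)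
          _ = 2 := by norm_num
      have step1 : Λ.edist (f v) (f c) ≤ 1 := by
        rcases hf v c hvc with he | ha
        · simp [he, SimpleGraph.edist_self]
        · exact SimpleGraph.edist_eq_one_iff_adj.mpr ha |>.le
      have hrec := ih (l - 2) (by omega) q (by omega)
      calc Λ.edist (f v) (f w) ≤ Λ.edist (f v) (f c) + Λ.edist (f c) (f w) :=
            SimpleGraph.edist_triangle
        _ ≤ 1 + ((l - 2 + 1) / 2 : ℕ) := add_le_add step1 hrec
        _ = ((1 + (l - 2 + 1) / 2 : ℕ) : ℕ∞) := by push_cast; ring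
        _ ≤ (((l + 1) / 2 : ℕ) : ℕ∞) := by
            have : 1 + (l - 2 + 1) / 2 ≤ (l + 1) / 2 := by omega
            exact_mod_cast this


/-- From a GraphLipschitz map, get a real bound for vertices at bounded graph distance. -/
lemma lip_bound {V : Type w} {X : Type u} [MetricSpace X] {Γ : SimpleGraph V} {g : V → X}
    (hg : GraphLipschitz Γ g) :
    ∃ L : ℝ, 0 ≤ L ∧ ∀ (c : ℕ) (v w : V), Γ.edist v w ≤ (c : ℕ∞) →
      dist (g v) (g w) ≤ L * c := by
  obtain ⟨L, hL⟩ := hg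
  refine ⟨L, L.coe_nonneg, fun c v w h => ?_⟩
  have h1 : edist (g v) (g w) ≤ (L : ℝ≥0∞) * (c : ℝ≥0∞) := by
    refine (hL v w).trans ?_
    gcongr
    exact_mod_cast h
  have h2 : (L : ℝ≥0∞) * (c : ℝ≥0∞) ≠ ⊤ := by
    simp [ENNReal.mul_eq_top]
  rw [dist_edist]
  calc (edist (g v) (g w)).toReal ≤ ((L : ℝ≥0∞) * (c : ℝ≥0∞)).toReal :=
        ENNReal.toReal_mono h2 h1
    _ = L * c := by simp [ENNReal.toReal_mul]

lemma lsclose_symm {Z : Type w} {X : Type u} [MetricSpace X] {f g : Z → X}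
    (h : LSClose f g) : LSClose g f := by
  obtain ⟨C, hC⟩ := h; exact ⟨C, fun z => (dist_comm (g z) (f z)) ▸ hC z⟩

lemma lsclose_trans {Z : Type w} {X : Type u} [MetricSpace X] {f g h : Z → X}
    (h1 : LSClose f g) (h2 : LSClose g h) : LSClose f h := by
  obtain ⟨C1, hC1⟩ := h1; obtain ⟨C2, hC2⟩ := h2
  exact ⟨C1 + C2, fun z => (dist_triangle (f z) (g z) (h z)).trans (add_le_add (hC1 z) (hC2 z))⟩

lemma lsclose_precomp {Z' Z : Type w} {X : Type u} [MetricSpace X] {f g : Z → X}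
    (h : LSClose f g) (e : Z' → Z) : LSClose (fun z => f (e z)) (fun z => g (e z)) := by
  obtain ⟨C, hC⟩ := h; exact ⟨C, fun z => hC (e z)⟩

lemma lsclose_nonneg {Z : Type w} {X : Type u} [MetricSpace X] {f g : Z → X}
    (h : LSClose f g) : ∃ C : ℝ, 0 ≤ C ∧ ∀ z : Z, dist (f z) (g z) ≤ C := by
  obtain ⟨C, hC⟩ := h
  exact ⟨max C 0, le_max_right _ _, fun z => (hC z).trans (le_max_left _ _)⟩

/-- Graph on a metric space with edges between distinct points at distance ≤ t. -/
def distGraph (X : Type u) [MetricSpace X] (t : ℝ) : SimpleGraph X where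
  Adj x y := x ≠ y ∧ dist x y ≤ t
  symm := by constructor; intro x y ⟨h1, h2⟩; exact ⟨h1.symm, by rwa [dist_comm]⟩
  loopless := by constructor; intro x ⟨h1, _⟩; exact h1 rfl

lemma distGraph_walk_bound {X : Type u} [MetricSpace X] {t : ℝ} (ht : 0 ≤ t)
    {x y : X} (p : (distGraph X t).Walk x y) :
    edist x y ≤ ENNReal.ofReal t * p.length := by
  induction p with
  | nil => simp
  | cons h q ih =>
    rename_i a b c
    calc edist a c ≤ edist a b + edist b c := edist_triangle _ _ _
      _ ≤ ENNReal.ofReal t + ENNReal.ofReal t * q.length := by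
          refine add_le_add ?_ ih
          rw [edist_dist]
          exact ENNReal.ofReal_le_ofReal h.2
      _ = ENNReal.ofReal t * ((q.length : ℝ≥0∞) + 1) := by ring
      _ = _ := by rw [SimpleGraph.Walk.length_cons]; push_cast; ring

lemma distGraph_id_lip {X : Type u} [MetricSpace X] {t : ℝ} (ht : 1 ≤ t) :
    GraphLipschitz (distGraph X t) (id : X → X) := by
  have ht0 : (0:ℝ) ≤ t := by linarith
  refine ⟨t.toNNReal, fun v w => ?_⟩
  rcases eq_or_ne ((distGraph X t).edist v w) ⊤ with h | h
  · rw [h]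
    have hne : ((t.toNNReal : ℝ≥0∞)) ≠ 0 := by
      simp only [ne_eq, ENNReal.coe_eq_zero, Real.toNNReal_eq_zero, not_le]
      linarith
    simp [ENNReal.mul_top hne]
  · obtain ⟨p, hp⟩ := SimpleGraph.exists_walk_of_edist_ne_top h
    rw [← hp]
    have := distGraph_walk_bound (X := X) (t := t) ht0 p
    simpa [ENNReal.ofReal] using this


universe u v w

lemma p_compat_le {X : Type u} [MetricSpace X] (C : CoarseGraphOf X) (n : ℕ) :
    ∀ m (h : n ≤ m), LSClose (C.p n) (fun v => C.p m (C.i n m h v)) := by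
  intro m h
  induction m, h using Nat.le_induction with
  | base => exact ⟨0, fun v => by beta_reduce; rw [C.i_id]; simp⟩
  | succ m hm ih =>
    obtain ⟨c1, h1⟩ := ih
    obtain ⟨c2, h2⟩ := C.p_compat m
    refine ⟨c1 + c2, fun v => ?_⟩
    have hic := C.i_comp n m (m+1) hm (Nat.le_succ m) v
    calc dist (C.p n v) (C.p (m+1) (C.i n (m+1) (hm.trans (Nat.le_succ m)) v))
        ≤ dist (C.p n v) (C.p m (C.i n m hm v))
          + dist (C.p m (C.i n m hm v)) (C.p (m+1) (C.i n (m+1) (hm.trans (Nat.le_succ m)) v)) :=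
          dist_triangle _ _ _
      _ ≤ c1 + c2 := by
          refine add_le_add (h1 v) ?_
          have := h2 (C.i n m hm v)
          beta_reduce at this
          rwa [hic] at this

lemma collapse {X : Type u} [MetricSpace X] (C : CoarseGraphOf X) :
    ∀ (c : ℕ) (n : ℕ), ∃ m, ∃ h : n ≤ m, ∀ v w : C.V n,
      (C.G n).edist v w ≤ (c : ℕ∞) → (C.G m).edist (C.i n m h v) (C.i n m h w) ≤ 1 := by
  intro c
  induction c using Nat.strong_induction_on with
  | _ c ih =>
    intro n
    by_cases hc : c ≤ 1
    · refine ⟨n, le_rfl, fun v w h => ?_⟩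
      rw [C.i_id, C.i_id]
      exact h.trans (by exact_mod_cast hc)
    · obtain ⟨m₁, hm₁, hprop⟩ := C.dist_two n
      obtain ⟨m, hm, hfin⟩ := ih ((c+1)/2) (by omega) m₁
      refine ⟨m, hm₁.le.trans hm, fun v w h => ?_⟩
      have h1 : (C.G m₁).edist (C.i n m₁ hm₁.le v) (C.i n m₁ hm₁.le w)
          ≤ (((c+1)/2 : ℕ) : ℕ∞) := by
        have hne : (C.G n).edist v w ≠ ⊤ := by
          intro he
          rw [he] at h
          exact (by simp : ¬ (⊤:ℕ∞) ≤ (c:ℕ∞)) h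
        obtain ⟨p, hp⟩ := SimpleGraph.exists_walk_of_edist_ne_top hne
        rw [← hp] at h
        exact walk_half hprop c p (by exact_mod_cast h)
      have h2 := hfin _ _ h1
      rwa [C.i_comp, C.i_comp] at h2

/-- a pre-morphism between coarse graphs of `X` and `Y` induces a
bornologous function `f : X → Y`, unique up to ls-equivalence, with
`q_{n(k)} ∘ f_k ~ls f ∘ p_k` for all `k`. -/
theorem premorphism_induces_bornologous_map {X Y : Type u}
    [MetricSpace X] [MetricSpace Y]
    (CV : CoarseGraphOf X) (CW : CoarseGraphOf Y)
    (nF : ℕ → ℕ) (f : ∀ k, CV.V k → CW.V (nF k))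
    (hshort : ∀ k, Short (CV.G k) (CW.G (nF k)) (f k))
    (hcompat : ∀ k, ∃ m, ∃ h₁ : nF k ≤ m, ∃ h₂ : nF (k + 1) ≤ m,
      LSCloseGraph (CW.G m)
        (fun v => CW.i (nF k) m h₁ (f k v))
        (fun v => CW.i (nF (k + 1)) m h₂ (f (k + 1) (CV.i k (k + 1) (Nat.le_succ k) v)))) :
    ∃ F : X → Y, Bornologous F ∧
      (∀ k, LSClose (fun v => CW.p (nF k) (f k v)) (fun v => F (CV.p k v))) ∧
      ∀ F' : X → Y, Bornologous F' →
        (∀ k, LSClose (fun v => CW.p (nF k) (f k v)) (fun v => F' (CV.p k v))) →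
        LSClose F' F := by
  classical
  -- one-step compatibility of q ∘ f in Y
  have ffstep : ∀ K, LSClose (fun v : CV.V K => CW.p (nF K) (f K v))
      (fun v => CW.p (nF (K+1)) (f (K+1) (CV.i K (K+1) (Nat.le_succ K) v))) := by
    intro K
    obtain ⟨m, h₁, h₂, D, hD⟩ := hcompat K
    have e1 : LSClose (fun v : CV.V K => CW.p (nF K) (f K v))
        (fun v => CW.p m (CW.i (nF K) m h₁ (f K v))) :=
      lsclose_precomp (p_compat_le CW (nF K) m h₁) (fun v => f K v)
    have e3 : LSClose
        (fun v : CV.V K => CW.p (nF (K+1)) (f (K+1) (CV.i K (K+1) (Nat.le_succ K) v)))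
        (fun v => CW.p m (CW.i (nF (K+1)) m h₂ (f (K+1) (CV.i K (K+1) (Nat.le_succ K) v)))) :=
      lsclose_precomp (p_compat_le CW (nF (K+1)) m h₂)
        (fun v => f (K+1) (CV.i K (K+1) (Nat.le_succ K) v))
    have e2 : LSClose (fun v : CV.V K => CW.p m (CW.i (nF K) m h₁ (f K v)))
        (fun v => CW.p m (CW.i (nF (K+1)) m h₂ (f (K+1) (CV.i K (K+1) (Nat.le_succ K) v)))) := by
      obtain ⟨L, hL0, hL⟩ := lip_bound (CW.p_lip m)
      exact ⟨L * D, fun v => hL D _ _ (hD v)⟩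
    exact lsclose_trans e1 (lsclose_trans e2 (lsclose_symm e3))
  -- iterated compatibility
  have ffcompat : ∀ k K (h : k ≤ K), LSClose (fun v : CV.V k => CW.p (nF k) (f k v))
      (fun v => CW.p (nF K) (f K (CV.i k K h v))) := by
    intro k K h
    induction K, h using Nat.le_induction with
    | base => exact ⟨0, fun v => by beta_reduce; rw [CV.i_id]; simp⟩
    | succ K hK ih =>
      refine lsclose_trans ih ?_
      obtain ⟨c, hc⟩ := lsclose_precomp (ffstep K) (CV.i k K hK)
      refine ⟨c, fun v => ?_⟩
      have h2 := hc v
      beta_reduce at h2 ⊢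
      rwa [CV.i_comp] at h2
  -- base lift of the identity with threshold 1
  obtain ⟨n₀, g', hg's, hg'c⟩ := CV.lift X (distGraph X 1) id (distGraph_id_lip le_rfl)
  -- the comparison lemma
  have compare : ∀ t : ℝ, 1 ≤ t → ∃ m₁, ∃ hm₁ : n₀ ≤ m₁, ∃ D : ℕ,
      ∀ x y : X, dist x y ≤ t →
        (CV.G m₁).edist (CV.i n₀ m₁ hm₁ (g' x)) (CV.i n₀ m₁ hm₁ (g' y)) ≤ (D : ℕ∞) := by
    intro t htt
    obtain ⟨nt, ht, hts, htc⟩ := CV.lift X (distGraph X t) id (distGraph_id_lip htt)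
    have hn₀N : n₀ ≤ max n₀ nt := le_max_left _ _
    have hntN : nt ≤ max n₀ nt := le_max_right _ _
    set N := max n₀ nt with hN
    have hts1 : Short (distGraph X (1:ℝ)) (CV.G nt) ht := by
      intro x y hxy
      exact hts x y ⟨hxy.1, hxy.2.trans htt⟩
    have ha : Short (distGraph X (1:ℝ)) (CV.G N) (fun x => CV.i n₀ N hn₀N (g' x)) :=
      short_comp hg's (CV.i_short _ _ _)
    have hb : Short (distGraph X (1:ℝ)) (CV.G N) (fun x => CV.i nt N hntN (ht x)) :=
      short_comp hts1 (CV.i_short _ _ _)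
    have hclose : LSClose (fun x => CV.p N (CV.i n₀ N hn₀N (g' x)))
        (fun x => CV.p N (CV.i nt N hntN (ht x))) := by
      have c1 : LSClose (fun x => CV.p N (CV.i n₀ N hn₀N (g' x))) (fun x => CV.p n₀ (g' x)) :=
        lsclose_symm (lsclose_precomp (p_compat_le CV n₀ N hn₀N) g')
      have c2 : LSClose (fun x => CV.p nt (ht x)) (fun x => CV.p N (CV.i nt N hntN (ht x))) :=
        lsclose_precomp (p_compat_le CV nt N hntN) ht
      exact lsclose_trans c1 (lsclose_trans (lsclose_trans hg'c (lsclose_symm htc)) c2)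
    obtain ⟨m₁, hm₁, D, hD⟩ := CV.sep X (distGraph X (1:ℝ)) N _ _ ha hb hclose
    refine ⟨m₁, hn₀N.trans hm₁.le, 2*D+1, fun x y hxy => ?_⟩
    have h1 : (CV.G nt).edist (ht x) (ht y) ≤ 1 := by
      rcases eq_or_ne x y with rfl | hne
      · simp [SimpleGraph.edist_self]
      · exact adj_edist_le_one (hts x y ⟨hne, hxy⟩)
    have hmid : (CV.G m₁).edist (CV.i N m₁ hm₁.le (CV.i nt N hntN (ht x)))
        (CV.i N m₁ hm₁.le (CV.i nt N hntN (ht y))) ≤ 1 := by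
      calc (CV.G m₁).edist (CV.i N m₁ hm₁.le (CV.i nt N hntN (ht x)))
            (CV.i N m₁ hm₁.le (CV.i nt N hntN (ht y)))
          ≤ (CV.G N).edist (CV.i nt N hntN (ht x)) (CV.i nt N hntN (ht y)) :=
            short_edist_le (CV.i_short _ _ _) _ _
        _ ≤ (CV.G nt).edist (ht x) (ht y) := short_edist_le (CV.i_short _ _ _) _ _
        _ ≤ 1 := h1
    have e1 := hD x
    have e2 := hD y
    beta_reduce at e1 e2
    have tri : (CV.G m₁).edist (CV.i N m₁ hm₁.le (CV.i n₀ N hn₀N (g' x)))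
        (CV.i N m₁ hm₁.le (CV.i n₀ N hn₀N (g' y))) ≤ (D:ℕ∞) + 1 + D := by
      calc (CV.G m₁).edist (CV.i N m₁ hm₁.le (CV.i n₀ N hn₀N (g' x)))
            (CV.i N m₁ hm₁.le (CV.i n₀ N hn₀N (g' y)))
          ≤ (CV.G m₁).edist (CV.i N m₁ hm₁.le (CV.i n₀ N hn₀N (g' x)))
              (CV.i N m₁ hm₁.le (CV.i nt N hntN (ht x)))
            + (CV.G m₁).edist (CV.i N m₁ hm₁.le (CV.i nt N hntN (ht x)))
              (CV.i N m₁ hm₁.le (CV.i nt N hntN (ht y)))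
            + (CV.G m₁).edist (CV.i N m₁ hm₁.le (CV.i nt N hntN (ht y)))
              (CV.i N m₁ hm₁.le (CV.i n₀ N hn₀N (g' y))) := by
            refine le_trans
              (SimpleGraph.edist_triangle (v := CV.i N m₁ hm₁.le (CV.i nt N hntN (ht y)))) ?_
            exact add_le_add_left
              (SimpleGraph.edist_triangle (v := CV.i N m₁ hm₁.le (CV.i nt N hntN (ht x)))) _
        _ ≤ (D:ℕ∞) + 1 + D := by
            refine add_le_add (add_le_add e1 hmid) ?_
            rw [SimpleGraph.edist_comm]
            exact e2
    simp only [CV.i_comp] at tri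
    refine le_trans tri ?_
    have : (D:ℕ∞) + 1 + D = ((2*D+1 : ℕ) : ℕ∞) := by push_cast; ring
    rw [this]
  -- the induced map
  refine ⟨fun x => CW.p (nF n₀) (f n₀ (g' x)), ?_, ?_, ?_⟩
  · -- bornologous
    intro t ht0
    obtain ⟨m₁, hm₁, D, hD⟩ := compare (max t 1) (le_max_right _ _)
    obtain ⟨E, hE0, hE⟩ := lsclose_nonneg (ffcompat n₀ m₁ hm₁)
    obtain ⟨L, hL0, hL⟩ := lip_bound (CW.p_lip (nF m₁))
    have hLD : 0 ≤ L * D := mul_nonneg hL0 (Nat.cast_nonneg D)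
    refine ⟨E + L * D + E + 1, by linarith, fun x y hxy => ?_⟩
    have h1 := hD x y (le_trans hxy.le (le_max_left _ _))
    have h2 : (CW.G (nF m₁)).edist (f m₁ (CV.i n₀ m₁ hm₁ (g' x)))
        (f m₁ (CV.i n₀ m₁ hm₁ (g' y))) ≤ (D:ℕ∞) :=
      le_trans (short_edist_le (hshort m₁) _ _) h1
    have h3 := hL D _ _ h2
    have h4 := hE (g' x)
    have h5 := hE (g' y)
    beta_reduce at h4 h5
    calc dist (CW.p (nF n₀) (f n₀ (g' x))) (CW.p (nF n₀) (f n₀ (g' y)))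
        ≤ dist (CW.p (nF n₀) (f n₀ (g' x))) (CW.p (nF m₁) (f m₁ (CV.i n₀ m₁ hm₁ (g' x))))
          + dist (CW.p (nF m₁) (f m₁ (CV.i n₀ m₁ hm₁ (g' x))))
              (CW.p (nF m₁) (f m₁ (CV.i n₀ m₁ hm₁ (g' y))))
          + dist (CW.p (nF m₁) (f m₁ (CV.i n₀ m₁ hm₁ (g' y))))
              (CW.p (nF n₀) (f n₀ (g' y))) := dist_triangle4 _ _ _ _
      _ ≤ E + L * D + E := by
          refine add_le_add (add_le_add h4 h3) ?_
          rw [dist_comm]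
          exact h5
      _ < E + L * D + E + 1 := by linarith
  · -- compatibility with the projections
    intro k
    obtain ⟨Lk, hLk0, hLk⟩ := lip_bound (CV.p_lip k)
    obtain ⟨m₁, hm₁, D, hD⟩ := compare (Lk + 1) (by linarith)
    obtain ⟨m₂, hm₂, hcol⟩ := collapse CV D m₁
    have hnm₂ : n₀ ≤ m₂ := hm₁.trans hm₂
    have hψs : Short (CV.G k) (CV.G m₂) (fun v => CV.i n₀ m₂ hnm₂ (g' (CV.p k v))) := by
      intro v w hadj
      apply edist_le_one_cases
      have hd : dist (CV.p k v) (CV.p k w) ≤ Lk + 1 := by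
        have := hLk 1 v w (adj_edist_le_one (Or.inr hadj))
        simp only [Nat.cast_one, mul_one] at this
        linarith
      have h1 := hD _ _ hd
      have h2 := hcol _ _ h1
      simp only [CV.i_comp] at h2
      exact h2
    have hkM₀ : k ≤ max m₂ k := le_max_right _ _
    have hm₂M₀ : m₂ ≤ max m₂ k := le_max_left _ _
    set M₀ := max m₂ k with hM₀
    have ha : Short (CV.G k) (CV.G M₀) (fun v => CV.i k M₀ hkM₀ v) := by
      intro v w hadj; exact CV.i_short k M₀ hkM₀ v w hadj
    have hb : Short (CV.G k) (CV.G M₀)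
        (fun v => CV.i m₂ M₀ hm₂M₀ (CV.i n₀ m₂ hnm₂ (g' (CV.p k v)))) :=
      short_comp hψs (CV.i_short _ _ _)
    have hclose : LSClose (fun v => CV.p M₀ (CV.i k M₀ hkM₀ v))
        (fun v => CV.p M₀ (CV.i m₂ M₀ hm₂M₀ (CV.i n₀ m₂ hnm₂ (g' (CV.p k v))))) := by
      have c1 : LSClose (fun v : CV.V k => CV.p M₀ (CV.i k M₀ hkM₀ v)) (CV.p k) :=
        lsclose_symm (p_compat_le CV k M₀ hkM₀)
      have c2 : LSClose (CV.p k) (fun v : CV.V k => CV.p n₀ (g' (CV.p k v))) :=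
        lsclose_precomp (lsclose_symm hg'c) (CV.p k)
      have c3 : LSClose (fun v : CV.V k => CV.p n₀ (g' (CV.p k v)))
          (fun v => CV.p m₂ (CV.i n₀ m₂ hnm₂ (g' (CV.p k v)))) :=
        lsclose_precomp (p_compat_le CV n₀ m₂ hnm₂) (fun v => g' (CV.p k v))
      have c4 : LSClose (fun v : CV.V k => CV.p m₂ (CV.i n₀ m₂ hnm₂ (g' (CV.p k v))))
          (fun v => CV.p M₀ (CV.i m₂ M₀ hm₂M₀ (CV.i n₀ m₂ hnm₂ (g' (CV.p k v))))) :=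
        lsclose_precomp (p_compat_le CV m₂ M₀ hm₂M₀) (fun v => CV.i n₀ m₂ hnm₂ (g' (CV.p k v)))
      exact lsclose_trans c1 (lsclose_trans c2 (lsclose_trans c3 c4))
    obtain ⟨m₃, hm₃, D₃, hD₃⟩ := CV.sep (CV.V k) (CV.G k) M₀ _ _ ha hb hclose
    obtain ⟨L₃, hL₃0, hL₃⟩ := lip_bound (CW.p_lip (nF m₃))
    have hkm₃ : k ≤ m₃ := hkM₀.trans hm₃.le
    have hn₀m₃ : n₀ ≤ m₃ := hnm₂.trans (hm₂M₀.trans hm₃.le)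
    have e1 : LSClose (fun v : CV.V k => CW.p (nF k) (f k v))
        (fun v => CW.p (nF m₃) (f m₃ (CV.i k m₃ hkm₃ v))) := ffcompat k m₃ hkm₃
    have e2 : LSClose (fun v : CV.V k => CW.p (nF n₀) (f n₀ (g' (CV.p k v))))
        (fun v => CW.p (nF m₃) (f m₃ (CV.i n₀ m₃ hn₀m₃ (g' (CV.p k v))))) :=
      lsclose_precomp (ffcompat n₀ m₃ hn₀m₃) (fun v => g' (CV.p k v))
    have emid : LSClose (fun v : CV.V k => CW.p (nF m₃) (f m₃ (CV.i k m₃ hkm₃ v)))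
        (fun v => CW.p (nF m₃) (f m₃ (CV.i n₀ m₃ hn₀m₃ (g' (CV.p k v))))) := by
      refine ⟨L₃ * D₃, fun v => ?_⟩
      have h1 := hD₃ v
      beta_reduce at h1
      simp only [CV.i_comp] at h1
      have h2 : (CW.G (nF m₃)).edist (f m₃ (CV.i k m₃ hkm₃ v))
          (f m₃ (CV.i n₀ m₃ hn₀m₃ (g' (CV.p k v)))) ≤ (D₃:ℕ∞) :=
        le_trans (short_edist_le (hshort m₃) _ _) h1
      exact hL₃ D₃ _ _ h2
    exact lsclose_trans e1 (lsclose_trans emid (lsclose_symm e2))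
  · -- uniqueness
    intro F' hF'b hF'p
    obtain ⟨C₀, hC₀0, hC₀⟩ := lsclose_nonneg hg'c
    obtain ⟨s, hs0, hsp⟩ := hF'b (C₀ + 1) (by linarith)
    obtain ⟨C', hC'⟩ := hF'p n₀
    refine ⟨s + C', fun x => ?_⟩
    have h0 : dist x (CV.p n₀ (g' x)) < C₀ + 1 := by
      have := hC₀ x
      beta_reduce at this
      rw [dist_comm]
      calc dist (CV.p n₀ (g' x)) x = dist (CV.p n₀ (g' x)) (id x) := rfl
        _ ≤ C₀ := this
        _ < C₀ + 1 := by linarith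
    have h1 : dist (F' x) (F' (CV.p n₀ (g' x))) < s := hsp _ _ h0
    have h2 : dist (F' (CV.p n₀ (g' x))) (CW.p (nF n₀) (f n₀ (g' x))) ≤ C' := by
      have := hC' (g' x)
      beta_reduce at this
      rw [dist_comm]
      exact this
    calc dist (F' x) (CW.p (nF n₀) (f n₀ (g' x)))
        ≤ dist (F' x) (F' (CV.p n₀ (g' x)))
          + dist (F' (CV.p n₀ (g' x))) (CW.p (nF n₀) (f n₀ (g' x))) := dist_triangle _ _ _
      _ ≤ s + C' := add_le_add h1.le h2
end
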